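/- Let λ < 0, L > 0 and T ≥ 0. Let f : [0,L] × [0,∞) → ℝ be continuous with f(x,t) = 0 whenever t ≥ T, and let u : [0,L] × [0,∞) → ℝ be continuously differentiable and satisfy the forced transport equation ∂ₜu + λ ∂ₓu = f(x,t) on [0,L] × [0,∞), together with the boundary condition u(L,t) = 0 for all t ≥ T. Then u(x,t) = 0 for every x ∈ [0,L] and every t ≥ T + (L − x)/(−λ); in particular u(·,t) ≡ 0 on [0,L] for all t ≥ T + L/(−λ). -/

import Mathlib

open Real Set Filter

/-- Cascade step of the finite-time stabilization argument:
for a forced transport equation at negative speed `λ` whose source `f` vanishes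
for `t ≥ T` and whose downstream inflow `u(L,t)` is zero for `t ≥ T`, the
solution is extinguished after the additional transport time:
`u(x,t) = 0` for all `t ≥ T + (L − x)/(−λ)`. -/
theorem forced_transport_upstream_finite_time
    (lam L T : ℝ) (hlam : lam < 0) (hL : 0 < L) (hT : 0 ≤ T)
    (f : ℝ → ℝ → ℝ)
    (hfC : ContinuousOn (fun p : ℝ × ℝ => f p.1 p.2) (Icc 0 L ×ˢ Ici 0))
    (hf0 : ∀ x t, T ≤ t → f x t = 0)
    (u : ℝ → ℝ → ℝ)
    (hC1 : ContDiffOn ℝ 1 (fun p : ℝ × ℝ => u p.1 p.2) (Icc 0 L ×ˢ Ici 0))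
    (pde : ∀ x ∈ Icc (0:ℝ) L, ∀ t ∈ Ici (0:ℝ),
      deriv (fun s => u x s) t + lam * deriv (fun y => u y t) x = f x t)
    (bc : ∀ t, T ≤ t → u L t = 0) :
    ∀ x ∈ Icc (0:ℝ) L, ∀ t, T + (L - x) / (-lam) ≤ t → u x t = 0 := by
  have hc : (0:ℝ) < -lam := by linarith
  have hlamne : lam ≠ 0 := ne_of_lt hlam
  set S : Set (ℝ × ℝ) := Icc (0:ℝ) L ×ˢ Ici (0:ℝ) with hS
  have hFc : ContinuousOn (fun p : ℝ × ℝ => u p.1 p.2) S := hC1.continuousOn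
  -- interior vanishing
  have interior_zero : ∀ x ∈ Ioo (0:ℝ) L, ∀ t, T + (L - x)/(-lam) < t → u x t = 0 := by
    intro x hx t ht
    set sL := t - (L - x)/(-lam) with hsLdef
    have hdivpos : 0 < (L - x)/(-lam) := div_pos (by linarith [hx.2]) hc
    have hsLT : T < sL := by simp only [hsLdef]; linarith
    have hsLt : sL < t := by simp only [hsLdef]; linarith
    set γ : ℝ → ℝ := fun s => x + lam * (s - t) with hγ
    have hγt : γ t = x := by simp [hγ]
    have hγsL : γ sL = L := by
      simp only [hγ, hsLdef]
      field_simp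
      ring
    have hmem : ∀ s ∈ Icc sL t, (γ s, s) ∈ S := by
      intro s hs
      have h1 : 0 ≤ lam * (s - t) := by nlinarith [hs.2]
      have h2 : lam * (s - t) ≤ L - x := by
        have hs1 : sL ≤ s := hs.1
        rw [hsLdef] at hs1
        have : (-lam) * (t - s) ≤ (-lam) * ((L - x)/(-lam)) := by
          apply mul_le_mul_of_nonneg_left _ hc.le
          linarith
        rw [mul_div_cancel₀ _ (ne_of_gt hc)] at this
        nlinarith
      refine ⟨⟨?_, ?_⟩, ?_⟩
      · show (0:ℝ) ≤ x + lam * (s - t)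
        nlinarith [hx.1]
      · show x + lam * (s - t) ≤ L
        nlinarith
      · show (0:ℝ) ≤ s
        exact le_trans (le_trans hT hsLT.le) hs.1
    set g : ℝ → ℝ := fun s => u (γ s) s with hg
    have hpathc : Continuous fun s : ℝ => (γ s, s) := by fun_prop
    have hgcont : ContinuousOn g (Icc sL t) :=
      hFc.comp hpathc.continuousOn hmem
    have hderiv : ∀ s ∈ Ioo sL t, HasDerivAt g 0 s := by
      intro s hs
      have hγmem : γ s ∈ Ioo (0:ℝ) L := by
        constructor
        · show (0:ℝ) < x + lam * (s - t)
          have : 0 < lam * (s - t) := by nlinarith [hs.2]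
          nlinarith [hx.1]
        · show x + lam * (s - t) < L
          have h2 : lam * (s - t) < L - x := by
            have hs1 : sL < s := hs.1
            rw [hsLdef] at hs1
            have : (-lam) * (t - s) < (-lam) * ((L - x)/(-lam)) := by
              apply mul_lt_mul_of_pos_left _ hc
              linarith
            rw [mul_div_cancel₀ _ (ne_of_gt hc)] at this
            nlinarith
          linarith
      have hspos : 0 < s := lt_of_le_of_lt hT (lt_trans hsLT hs.1)
      have hpI : ((γ s, s) : ℝ × ℝ) ∈ Ioo (0:ℝ) L ×ˢ Ioi (0:ℝ) := ⟨hγmem, hspos⟩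
      have hsub : (Ioo (0:ℝ) L ×ˢ Ioi (0:ℝ) : Set (ℝ × ℝ)) ⊆ S :=
        prod_mono Ioo_subset_Icc_self Ioi_subset_Ici_self
      have hnhds : S ∈ nhds ((γ s, s) : ℝ × ℝ) :=
        Filter.mem_of_superset ((isOpen_Ioo.prod isOpen_Ioi).mem_nhds hpI) hsub
      have hdF : DifferentiableAt ℝ (fun p : ℝ × ℝ => u p.1 p.2) (γ s, s) :=
        ((hC1.differentiableOn one_ne_zero) (γ s, s) (hsub hpI)).differentiableAt hnhds
      set D := fderiv ℝ (fun p : ℝ × ℝ => u p.1 p.2) (γ s, s) with hD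
      have hF : HasFDerivAt (fun p : ℝ × ℝ => u p.1 p.2) D (γ s, s) := hdF.hasFDerivAt
      have hγd : HasDerivAt γ lam s := by
        have : HasDerivAt (fun z : ℝ => z - t) 1 s := (hasDerivAt_id s).sub_const t
        simpa [hγ] using (this.const_mul lam).const_add x
      have hpath : HasDerivAt (fun s : ℝ => ((γ s, s) : ℝ × ℝ)) ((lam, 1) : ℝ × ℝ) s :=
        hγd.prodMk (hasDerivAt_id s)
      have hgD : HasDerivAt g (D (lam, 1)) s := by
        have h := HasFDerivAt.comp_hasDerivAt (f := fun s : ℝ => ((γ s, s) : ℝ × ℝ)) s hF hpath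
        exact h
      -- partial derivatives
      have hx1 : HasDerivAt (fun y : ℝ => u y s) (D (1, 0)) (γ s) := by
        have hp : HasDerivAt (fun y : ℝ => ((y, s) : ℝ × ℝ)) ((1, 0) : ℝ × ℝ) (γ s) :=
          (hasDerivAt_id (γ s)).prodMk (hasDerivAt_const _ _)
        have h := HasFDerivAt.comp_hasDerivAt (f := fun y : ℝ => ((y, s) : ℝ × ℝ)) (γ s) hF hp
        exact h
      have ht1 : HasDerivAt (fun τ : ℝ => u (γ s) τ) (D (0, 1)) s := by
        have hp : HasDerivAt (fun τ : ℝ => ((γ s, τ) : ℝ × ℝ)) ((0, 1) : ℝ × ℝ) s :=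
          (hasDerivAt_const _ _).prodMk (hasDerivAt_id s)
        have h := HasFDerivAt.comp_hasDerivAt (f := fun τ : ℝ => ((γ s, τ) : ℝ × ℝ)) s hF hp
        exact h
      have hpde := pde (γ s) (Ioo_subset_Icc_self hγmem) s (le_of_lt hspos)
      rw [ht1.deriv, hx1.deriv] at hpde
      have hf : f (γ s) s = 0 := hf0 _ _ (le_of_lt (lt_trans hsLT hs.1))
      have hsplit : ((lam, 1) : ℝ × ℝ) = lam • ((1, 0) : ℝ × ℝ) + ((0, 1) : ℝ × ℝ) := by
        simp [Prod.ext_iff]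
      have hzero : D (lam, 1) = 0 := by
        have h1 : D (lam, 1) = lam * D (1, 0) + D (0, 1) := by
          rw [hsplit, map_add, map_smul]; simp
        rw [hf] at hpde
        rw [h1]; linarith
      rw [hzero] at hgD
      exact hgD
    have hconst : ∀ a ∈ Ioo sL t, g t = g a := by
      intro a ha
      have h := constant_of_has_deriv_right_zero
        (hgcont.mono (Icc_subset_Icc ha.1.le le_rfl))
        (fun s hs => (hderiv s ⟨lt_of_lt_of_le ha.1 hs.1, hs.2⟩).hasDerivWithinAt)
      exact h t (right_mem_Icc.mpr ha.2.le)
    haveI : (nhdsWithin sL (Ioo sL t)).NeBot :=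
      mem_closure_iff_nhdsWithin_neBot.mp
        (by rw [closure_Ioo hsLt.ne]; exact ⟨le_rfl, hsLt.le⟩)
    have h1 : Tendsto g (nhdsWithin sL (Ioo sL t)) (nhds (g sL)) :=
      ((hgcont sL ⟨le_rfl, hsLt.le⟩).mono Ioo_subset_Icc_self).tendsto
    have h2 : Tendsto g (nhdsWithin sL (Ioo sL t)) (nhds (g t)) := by
      refine Tendsto.congr' ?_ tendsto_const_nhds
      exact eventually_of_mem self_mem_nhdsWithin (fun a ha => hconst a ha)
    have hgt : g t = g sL := tendsto_nhds_unique h2 h1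
    have : g sL = 0 := by
      simp only [hg, hγsL]
      exact bc sL hsLT.le
    have hx0 : g t = u x t := by simp [hg, hγt]
    rw [← hx0, hgt, this]
  -- continuity extension
  intro x hx t ht
  set θ : ℕ → ℝ := fun n => 1 / (n + 1 : ℝ) with hθ
  have hθpos : ∀ n, 0 < θ n := fun n => by positivity
  have hθle : ∀ n, θ n ≤ 1 := fun n => by
    rw [hθ]
    rw [div_le_one (by positivity)]
    linarith [Nat.cast_nonneg (α := ℝ) n]
  have hθ0 : Tendsto θ atTop (nhds 0) := tendsto_one_div_add_atTop_nhds_zero_nat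
  set xn : ℕ → ℝ := fun n => x + θ n * (L/2 - x) with hxn
  set tn : ℕ → ℝ := fun n => max t (T + (L - xn n)/(-lam)) + θ n with htn
  have hxnI : ∀ n, xn n ∈ Ioo (0:ℝ) L := by
    intro n
    have h1 := hθpos n; have h2 := hθle n
    constructor
    · simp only [hxn]; nlinarith [hx.1, hx.2]
    · simp only [hxn]; nlinarith [hx.1, hx.2]
  have htnI : ∀ n, T + (L - xn n)/(-lam) < tn n := by
    intro n
    have := hθpos n
    calc T + (L - xn n)/(-lam) ≤ max t (T + (L - xn n)/(-lam)) := le_max_right _ _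
    _ < tn n := by simp only [htn]; linarith
  have huz : ∀ n, u (xn n) (tn n) = 0 := fun n =>
    interior_zero (xn n) (hxnI n) (tn n) (htnI n)
  have hxnlim : Tendsto xn atTop (nhds x) := by
    have : Tendsto (fun n => x + θ n * (L/2 - x)) atTop (nhds (x + 0 * (L/2 - x))) :=
      tendsto_const_nhds.add (hθ0.mul tendsto_const_nhds)
    simpa using this
  have htnlim : Tendsto tn atTop (nhds t) := by
    have hmax : Tendsto (fun n => max t (T + (L - xn n)/(-lam))) atTop
        (nhds (max t (T + (L - x)/(-lam)))) := by
      apply Tendsto.max tendsto_const_nhds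
      exact tendsto_const_nhds.add ((tendsto_const_nhds.sub hxnlim).div_const _)
    have : Tendsto tn atTop (nhds (max t (T + (L - x)/(-lam)) + 0)) := hmax.add hθ0
    rw [max_eq_left ht] at this
    simpa using this
  have hmemS : ∀ n, ((xn n, tn n) : ℝ × ℝ) ∈ S := by
    intro n
    refine ⟨Ioo_subset_Icc_self (hxnI n), ?_⟩
    have h1 : (0:ℝ) ≤ T + (L - xn n)/(-lam) :=
      add_nonneg hT (div_nonneg (by linarith [(hxnI n).2]) hc.le)
    exact le_of_lt (lt_of_le_of_lt h1 (htnI n))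
  have hxtS : ((x, t) : ℝ × ℝ) ∈ S := by
    refine ⟨hx, mem_Ici.mpr ?_⟩
    have : (0:ℝ) ≤ (L - x)/(-lam) := div_nonneg (by linarith [hx.2]) hc.le
    linarith
  have hseq : Tendsto (fun n => ((xn n, tn n) : ℝ × ℝ)) atTop (nhdsWithin (x, t) S) := by
    rw [tendsto_nhdsWithin_iff]
    exact ⟨hxnlim.prodMk_nhds htnlim, Eventually.of_forall hmemS⟩
  have hlim : Tendsto (fun n => u (xn n) (tn n)) atTop (nhds (u x t)) :=
    (hFc (x, t) hxtS).tendsto.comp hseq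
  have hlim0 : Tendsto (fun n => u (xn n) (tn n)) atTop (nhds 0) := by
    simp only [huz]; exact tendsto_const_nhds
  exact tendsto_nhds_unique hlim hlim0
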